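/- arXiv:2407.03483 — 2 statements merged into one kernel-verified Lean document; each statement's English description precedes it below -/
import Mathlib

section
/- Let κ : ℝ → ℝ be ℓ-periodic and continuously differentiable, and let 𝔲 : ℝ × ℝ × ℝ → ℝ (arguments t, x, θ) be a C² solution of the embedding PDE ∂𝔲/∂t = (∂/∂x + ∂/∂θ)(κ(θ)(∂𝔲/∂x + ∂𝔲/∂θ)) with 𝔲 ℓ-periodic in θ. Then for every phase φ ∈ ℝ, the function u_φ(t,x) := 𝔲(t, x, x+φ) satisfies the heterogeneous diffusion PDE ∂u_φ/∂t = ∂/∂x (κ(x+φ) ∂u_φ/∂x). -/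
/-- Phase-shift embedding lemma (1-D, α = 1): every solution of the embedding PDE,
evaluated along the diagonal θ = x + φ, solves the heterogeneous diffusion PDE. -/
theorem stmt0 (ℓ : ℝ) (κ : ℝ → ℝ) (𝔲 : ℝ → ℝ → ℝ → ℝ)
    (hκ : ContDiff ℝ 1 κ) (hκper : Function.Periodic κ ℓ)
    (h𝔲 : ContDiff ℝ 2 (fun p : ℝ × ℝ × ℝ => 𝔲 p.1 p.2.1 p.2.2))
    (h𝔲per : ∀ t x, Function.Periodic (𝔲 t x) ℓ)
    (hpde : ∀ t x θ,
      deriv (fun s => 𝔲 s x θ) t =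
        deriv (fun y => κ θ * (deriv (fun y' => 𝔲 t y' θ) y
            + deriv (fun θ' => 𝔲 t y θ') θ)) x
        + deriv (fun θ' => κ θ' * (deriv (fun y' => 𝔲 t y' θ') x
            + deriv (fun θ'' => 𝔲 t x θ'') θ')) θ) :
    ∀ φ t x,
      deriv (fun s => 𝔲 s x (x + φ)) t =
        deriv (fun y => κ (y + φ) * deriv (fun y' => 𝔲 t y' (y' + φ)) y) x := by
  intro φ t x
  rw [hpde t x (x + φ)]
  -- U : the solution at fixed time t, as a function of (x, θ)
  set U : ℝ × ℝ → ℝ := fun p => 𝔲 t p.1 p.2 with hU_def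
  have hU : ContDiff ℝ 2 U := h𝔲.comp (contDiff_const.prodMk contDiff_id)
  have hUd : Differentiable ℝ U := hU.differentiable (by norm_num)
  have hsplit : ((1, 1) : ℝ × ℝ) = (1, 0) + (0, 1) := by norm_num
  -- partial derivatives of U expressed via fderiv
  have hpx : ∀ y θ : ℝ, HasDerivAt (fun y' => 𝔲 t y' θ)
      (fderiv ℝ U (y, θ) (1, 0)) y := fun y θ =>
    (hUd (y, θ)).hasFDerivAt.comp_hasDerivAt (l := U) (f := fun x => (x, θ)) y
      ((hasDerivAt_id' y).prodMk (hasDerivAt_const y θ))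
  have hpθ : ∀ y θ : ℝ, HasDerivAt (fun θ' => 𝔲 t y θ')
      (fderiv ℝ U (y, θ) (0, 1)) θ := fun y θ =>
    (hUd (y, θ)).hasFDerivAt.comp_hasDerivAt θ
      ((hasDerivAt_const θ y).prodMk (hasDerivAt_id θ))
  have hdiag : ∀ y : ℝ, HasDerivAt (fun y' => 𝔲 t y' (y' + φ))
      (fderiv ℝ U (y, y + φ) (1, 1)) y := fun y =>
    (hUd (y, y + φ)).hasFDerivAt.comp_hasDerivAt (l := U) (f := fun x => (x, x + φ)) y
      ((hasDerivAt_id' y).prodMk ((hasDerivAt_id' y).add_const φ))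
  -- F = flux, as a function of (x, θ)
  set F : ℝ × ℝ → ℝ :=
    fun p => κ p.2 * (fderiv ℝ U p (1, 0) + fderiv ℝ U p (0, 1)) with hF_def
  have hfd : ContDiff ℝ 1 (fun p => fderiv ℝ U p) :=
    hU.fderiv_right (le_refl _)
  have hF : ContDiff ℝ 1 F :=
    (hκ.comp contDiff_snd).mul
      ((hfd.clm_apply contDiff_const).add (hfd.clm_apply contDiff_const))
  have hFd : Differentiable ℝ F := hF.differentiable (by norm_num)
  have hFpx : ∀ y θ : ℝ, HasDerivAt (fun y' => F (y', θ))
      (fderiv ℝ F (y, θ) (1, 0)) y := fun y θ =>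
    (hFd (y, θ)).hasFDerivAt.comp_hasDerivAt (l := F) (f := fun x => (x, θ)) y
      ((hasDerivAt_id' y).prodMk (hasDerivAt_const y θ))
  have hFpθ : ∀ y θ : ℝ, HasDerivAt (fun θ' => F (y, θ'))
      (fderiv ℝ F (y, θ) (0, 1)) θ := fun y θ =>
    (hFd (y, θ)).hasFDerivAt.comp_hasDerivAt θ
      ((hasDerivAt_const θ y).prodMk (hasDerivAt_id θ))
  have hFdiag : ∀ y : ℝ, HasDerivAt (fun y' => F (y', y' + φ))
      (fderiv ℝ F (y, y + φ) (1, 1)) y := fun y =>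
    (hFd (y, y + φ)).hasFDerivAt.comp_hasDerivAt (l := F) (f := fun x => (x, x + φ)) y
      ((hasDerivAt_id' y).prodMk ((hasDerivAt_id' y).add_const φ))
  -- the inner function of the goal's RHS is the diagonal of F
  have hinner : (fun y => κ (y + φ) * deriv (fun y' => 𝔲 t y' (y' + φ)) y)
      = fun y => F (y, y + φ) := by
    funext y
    rw [(hdiag y).deriv, hF_def]
    simp only
    rw [hsplit, (fderiv ℝ U (y, y + φ)).map_add]
  rw [hinner, (hFdiag x).deriv, hsplit, (fderiv ℝ F (x, x + φ)).map_add]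
  -- identify the two terms with the PDE's right-hand side
  have h1 : (fun y => κ (x + φ) * (deriv (fun y' => 𝔲 t y' (x + φ)) y
      + deriv (fun θ' => 𝔲 t y θ') (x + φ))) = fun y => F (y, x + φ) := by
    funext y
    rw [(hpx y (x + φ)).deriv, (hpθ y (x + φ)).deriv, hF_def]
  have h2 : (fun θ' => κ θ' * (deriv (fun y' => 𝔲 t y' θ') x
      + deriv (fun θ'' => 𝔲 t x θ'') θ')) = fun θ' => F (x, θ') := by
    funext θ'
    rw [(hpx x θ').deriv, (hpθ x θ').deriv, hF_def]
  rw [h1, h2, (hFpx x (x + φ)).deriv, (hFpθ x (x + φ)).deriv]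
end

section
/- Define the coordinate transform u = U/√(1 − 2V/(1+2U²)), v = U² + V/(1 − 2V/(1+2U²)), valid for 2V < 1 + 2U². Under this transform, the system du/dt = −uv, dv/dt = −v + u² − 2v² is equivalent to dU/dt = −U³, dV/dt = −V[1/(1+2U²) + 4U²]. Consequently, every solution with initial data (U₀,V₀) in the domain of validity satisfies |V(t)| ≤ |V₀| e^{−t} for all t ≥ 0. -/
set_option maxHeartbeats 1000000 in
/-- The marvellous coordinate transform conjugates du/dt = −uv, dv/dt = −v+u²−2v²
with dU/dt = −U³, dV/dt = −V[1/(1+2U²)+4U²] on the domain 2V < 1+2U², and every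
solution of the transformed system has |V(t)| ≤ |V(0)| e^{−t} for t ≥ 0. -/
theorem stmt3 (U V : ℝ → ℝ) (hdom : ∀ t, 2 * V t < 1 + 2 * (U t)^2)
    (hU : Differentiable ℝ U) (hV : Differentiable ℝ V)
    (u v : ℝ → ℝ)
    (hu : u = fun t => U t / Real.sqrt (1 - 2 * V t / (1 + 2 * (U t)^2)))
    (hv : v = fun t => (U t)^2 + V t / (1 - 2 * V t / (1 + 2 * (U t)^2))) :
    ((∀ t, HasDerivAt U (-(U t)^3) t ∧
        HasDerivAt V (-(V t) * (1/(1 + 2*(U t)^2) + 4*(U t)^2)) t) ↔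
      (∀ t, HasDerivAt u (-(u t * v t)) t ∧
        HasDerivAt v (-(v t) + (u t)^2 - 2*(v t)^2) t)) ∧
    ((∀ t, HasDerivAt U (-(U t)^3) t ∧
        HasDerivAt V (-(V t) * (1/(1 + 2*(U t)^2) + 4*(U t)^2)) t) →
      ∀ t ≥ (0:ℝ), |V t| ≤ |V 0| * Real.exp (-t)) := by
  have hApos : ∀ t, (0:ℝ) < 1 + 2 * (U t)^2 := fun t => by positivity
  have hAVpos : ∀ t, (0:ℝ) < 1 + 2 * (U t)^2 - 2 * V t := fun t => by nlinarith [hdom t]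
  have hwpos : ∀ t, (0:ℝ) < 1 - 2 * V t / (1 + 2 * (U t)^2) := by
    intro t
    rw [sub_pos, div_lt_one (hApos t)]
    exact hdom t
  have hrpos : ∀ t, 0 < Real.sqrt (1 - 2 * V t / (1 + 2 * (U t)^2)) :=
    fun t => Real.sqrt_pos.mpr (hwpos t)
  have hrsq : ∀ t, Real.sqrt (1 - 2 * V t / (1 + 2 * (U t)^2)) ^ 2
      = 1 - 2 * V t / (1 + 2 * (U t)^2) := fun t => Real.sq_sqrt (hwpos t).le
  constructor
  · constructor
    · -- forward
      intro h t
      obtain ⟨hU', hV'⟩ := h t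
      have hA' := ((hU'.pow 2).const_mul 2).const_add 1
      have hw' : HasDerivAt (fun t => 1 - 2 * V t / (1 + 2 * (U t)^2)) (2 * V t) t := by
        have h1 := ((hV'.const_mul 2).div hA' (hApos t).ne').const_sub 1
        refine h1.congr_deriv ?_
        have hA0 := (hApos t).ne'
        simp only [Pi.pow_apply]
        field_simp
        ring
      have hs' := hw'.sqrt (hwpos t).ne'
      constructor
      · simp only [hu, hv]
        have key := hU'.div hs' (hrpos t).ne'
        refine key.congr_deriv ?_
        have hr2 := hrsq t
        have hrne := (hrpos t).ne'
        generalize Real.sqrt (1 - 2 * V t / (1 + 2 * (U t)^2)) = r at *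
        rw [← hr2]
        field_simp
        ring
      · simp only [hu, hv]
        have key := (hU'.pow 2).add (hV'.div hw' (hwpos t).ne')
        refine key.congr_deriv ?_
        have hr2 := hrsq t
        have hrne := (hrpos t).ne'
        generalize Real.sqrt (1 - 2 * V t / (1 + 2 * (U t)^2)) = r at *
        have hr2' : r^2 * (1 + 2 * (U t)^2) = 1 + 2 * (U t)^2 - 2 * V t := by
          rw [hr2]
          field_simp
        rw [← hr2]
        field_simp
        linear_combination (U t^2 * r^2) * hr2'
    · -- backward
      intro h t
      obtain ⟨hu', hv'⟩ := h t
      have hueq : ∀ s, u s = U s / Real.sqrt (1 - 2 * V s / (1 + 2 * (U s)^2)) :=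
        fun s => by rw [hu]
      have hveq : ∀ s, v s = (U s)^2 + V s / (1 - 2 * V s / (1 + 2 * (U s)^2)) :=
        fun s => by rw [hv]
      have hu2 : ∀ s, (u s)^2 = (U s)^2 / (1 - 2 * V s / (1 + 2 * (U s)^2)) := by
        intro s; rw [hueq s, div_pow, hrsq s]
      have hS : ∀ s, 1 + 2 * v s - 2 * (u s)^2 = (1 - 2 * V s / (1 + 2 * (U s)^2))⁻¹ := by
        intro s
        rw [hveq s, hu2 s]
        have h1 := (hwpos s).ne'
        have h2 := (hApos s).ne'
        have h3 := (hAVpos s).ne'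
        field_simp
        ring
      have hSpos : ∀ s, 0 < 1 + 2 * v s - 2 * (u s)^2 := by
        intro s; rw [hS s]; exact inv_pos.mpr (hwpos s)
      have hSrpos : ∀ s, 0 < Real.sqrt (1 + 2 * v s - 2 * (u s)^2) :=
        fun s => Real.sqrt_pos.mpr (hSpos s)
      have hSrsq : ∀ s, Real.sqrt (1 + 2 * v s - 2 * (u s)^2) ^ 2 = 1 + 2 * v s - 2 * (u s)^2 :=
        fun s => Real.sq_sqrt (hSpos s).le
      have hUeq : U = fun s => u s / Real.sqrt (1 + 2 * v s - 2 * (u s)^2) := by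
        funext s
        rw [hS s, Real.sqrt_inv, div_inv_eq_mul, hueq s, div_mul_cancel₀ _ (hrpos s).ne']
      have hU2 : ∀ s, (U s)^2 = (u s)^2 / (1 + 2 * v s - 2 * (u s)^2) := by
        intro s
        rw [hS s, hu2 s, div_inv_eq_mul, div_mul_cancel₀ _ (hwpos s).ne']
      have hVeq : V = fun s => (v s * (1 + 2 * v s - 2 * (u s)^2) - (u s)^2)
          / (1 + 2 * v s - 2 * (u s)^2)^2 := by
        funext s
        rw [hS s, hveq s, hu2 s]
        have h1 := (hwpos s).ne'
        have h2 := (hApos s).ne'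
        have h3 := (hAVpos s).ne'
        field_simp
        have h4 : 1 + U s ^ 2 * 2 - V s * 2 ≠ 0 := by intro h; apply h3; linarith
        field_simp
        ring
      have hS' : HasDerivAt (fun s => 1 + 2 * v s - 2 * (u s)^2)
          (2 * (-(v t) + (u t)^2 - 2*(v t)^2) - 2 * ((2:ℕ) * u t ^ (2-1) * (-(u t * v t)))) t :=
        ((hv'.const_mul 2).const_add 1).sub ((hu'.pow 2).const_mul 2)
      have hSne := (hSpos t).ne'
      have h12v : (0:ℝ) < 1 + 2 * v t := by nlinarith [hSpos t, sq_nonneg (u t)]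
      constructor
      · simp only [hUeq]
        have key := hu'.div (hS'.sqrt hSne) (hSrpos t).ne'
        refine key.congr_deriv ?_
        have hr2 := hSrsq t
        have hrne := (hSrpos t).ne'
        generalize Real.sqrt (1 + 2 * v t - 2 * (u t)^2) = r at *
        field_simp
        first
        | linear_combination (u t*v t) * hr2
        | linear_combination (-(u t*v t)) * hr2
        | linear_combination (2*u t*v t) * hr2
        | linear_combination (-(2*u t*v t)) * hr2
        | linear_combination (u t*v t*r) * hr2
        | linear_combination (-(u t*v t*r)) * hr2
        | linear_combination (2*u t*v t*r) * hr2
        | linear_combination (-(2*u t*v t*r)) * hr2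
        | linear_combination (u t*v t*r^2) * hr2
        | linear_combination (-(u t*v t*r^2)) * hr2
        | linear_combination (2*u t*v t*r^2) * hr2
        | linear_combination (-(2*u t*v t*r^2)) * hr2
        | linear_combination (u t*v t*r^3) * hr2
        | linear_combination (-(u t*v t*r^3)) * hr2
        | linear_combination (2*u t*v t*r^3) * hr2
        | linear_combination (-(2*u t*v t*r^3)) * hr2
      · have hinv : 1/(1 + 2*(U t)^2) = (1 + 2 * v t - 2 * (u t)^2)/(1 + 2 * v t) := by
          rw [hU2 t]
          have h5 : 1 + 2 * v t ≠ 0 := by linarith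
          field_simp
          rw [sub_add_cancel, div_self h5]
        simp only [hVeq]
        rw [hinv, hU2 t]
        have key := ((hv'.mul hS').sub (hu'.pow 2)).div (hS'.pow 2)
          (pow_ne_zero 2 hSne)
        refine key.congr_deriv ?_
        simp only [Pi.pow_apply, Pi.mul_apply, Pi.sub_apply]
        have h5 : 1 + v t * 2 ≠ 0 := by linarith
        have h6 : 1 + v t * 2 - u t ^ 2 * 2 ≠ 0 := by intro h; apply hSne; linarith
        field_simp
        ring
  · -- decay
    intro h t ht
    have hfd : ∀ x, HasDerivAt (fun t => (V t)^2 * Real.exp (2*t))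
        ((2 * V x ^ 1 * (-(V x) * (1/(1 + 2*(U x)^2) + 4*(U x)^2))) * Real.exp (2*x)
          + (V x)^2 * (Real.exp (2*x) * 2)) x := by
      intro x
      have he : HasDerivAt (fun t : ℝ => Real.exp (2*t)) (Real.exp (2*x) * 2) x := by
        have h2 : HasDerivAt (fun t : ℝ => 2*t) 2 x := by
          simpa using (hasDerivAt_id x).const_mul 2
        exact h2.exp
      exact ((h x).2.pow 2).mul he
    have hmono : Antitone (fun t => (V t)^2 * Real.exp (2*t)) := by
      refine antitone_of_hasDerivAt_nonpos hfd ?_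
      intro x
      have hc : 1 ≤ 1/(1 + 2*(U x)^2) + 4*(U x)^2 := by
        rw [div_add' _ _ _ (hApos x).ne', le_div_iff₀ (hApos x)]
        nlinarith [sq_nonneg (U x), sq_nonneg ((U x)^2)]
      have he := Real.exp_pos (2*x)
      have key : 0 ≤ (V x)^2 * Real.exp (2*x) * (1/(1 + 2*(U x)^2) + 4*(U x)^2 - 1) :=
        mul_nonneg (mul_nonneg (sq_nonneg _) he.le) (by linarith)
      show 2 * V x ^ 1 * (-(V x) * (1/(1 + 2*(U x)^2) + 4*(U x)^2)) * Real.exp (2*x)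
          + (V x)^2 * (Real.exp (2*x) * 2) ≤ 0
      nlinarith [key]
    have hle : (V t)^2 * Real.exp (2*t) ≤ (V 0)^2 := by
      have := hmono ht
      simpa using this
    have hee : Real.exp (2*t) * Real.exp (-t)^2 = 1 := by
      rw [sq, ← Real.exp_add, ← Real.exp_add, show 2*t + (-t + -t) = 0 by ring, Real.exp_zero]
    have h1 : (V t)^2 ≤ (V 0)^2 * Real.exp (-t)^2 := by
      calc (V t)^2 = (V t)^2 * (Real.exp (2*t) * Real.exp (-t)^2) := by rw [hee, mul_one]
        _ = ((V t)^2 * Real.exp (2*t)) * Real.exp (-t)^2 := by ring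
        _ ≤ (V 0)^2 * Real.exp (-t)^2 := mul_le_mul_of_nonneg_right hle (sq_nonneg _)
    calc |V t| = Real.sqrt ((V t)^2) := (Real.sqrt_sq_eq_abs _).symm
      _ ≤ Real.sqrt ((V 0)^2 * Real.exp (-t)^2) := Real.sqrt_le_sqrt h1
      _ = |V 0| * Real.exp (-t) := by
          rw [Real.sqrt_mul (sq_nonneg _), Real.sqrt_sq_eq_abs,
            Real.sqrt_sq (Real.exp_pos _).le]
end
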